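/- Let F_1 and F_2 be k×k symmetric positive definite matrices and γ_1, γ_2 > 0 with γ_1 + γ_2 = 1. Suppose G is a k×k symmetric positive definite matrix with y^T F_1 y ≥ y^T G y and y^T F_2 y ≥ y^T G y for all y ∈ ℝ^k, with at least one of these inequalities strict for some y. Then det(γ_1 F_1 + γ_2 F_2) > det G. -/

import Mathlib

open Matrix
open scoped MatrixOrder


/-- key lemma: PD A, Hermitian B, quad form of B dominates with strict somewhere -/
lemma det_lt_det_aux {k : ℕ} {A B : Matrix (Fin k) (Fin k) ℝ}
    (hA : A.PosDef) (hB : B.IsHermitian)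
    (hle : ∀ y : Fin k → ℝ, y ⬝ᵥ A.mulVec y ≤ y ⬝ᵥ B.mulVec y)
    (hs : ∃ y : Fin k → ℝ, y ⬝ᵥ A.mulVec y < y ⬝ᵥ B.mulVec y) :
    A.det < B.det := by
  set D := B - A with hDdef
  have hDh : D.IsHermitian := hB.sub hA.isHermitian
  have hDquad : ∀ y : Fin k → ℝ, y ⬝ᵥ D.mulVec y = y ⬝ᵥ B.mulVec y - y ⬝ᵥ A.mulVec y := by
    intro y
    simp [hDdef, sub_mulVec, dotProduct_sub]
  have hDpsd : D.PosSemidef := by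
    refine posSemidef_iff_dotProduct_mulVec.mpr ⟨hDh, fun x => ?_⟩
    rw [star_trivial, hDquad]
    linarith [hle x]
  obtain ⟨y, hy⟩ := hs
  have hyD : 0 < y ⬝ᵥ D.mulVec y := by rw [hDquad]; linarith
  -- square root of A
  set R := CFC.sqrt A with hRdef
  have hRh : R.IsHermitian := (nonneg_iff_posSemidef.mp (CFC.sqrt_nonneg A)).1
  have hRt : Rᵀ = R := by
    rw [← conjTranspose_eq_transpose_of_trivial]; exact hRh
  have hRR : R * R = A := CFC.sqrt_mul_sqrt_self A (nonneg_iff_posSemidef.mpr hA.posSemidef)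
  have hdetA : R.det * R.det = A.det := by rw [← det_mul, hRR]
  have hRdet : R.det ≠ 0 := by
    intro h; rw [h, mul_zero] at hdetA; exact hA.det_pos.ne (hdetA)
  have hRu : IsUnit R.det := hRdet.isUnit
  set M := R⁻¹ * D * R⁻¹ with hMdef
  have hRMR : R * M * R = D := by
    rw [hMdef]
    calc R * (R⁻¹ * D * R⁻¹) * R = (R * R⁻¹) * D * (R⁻¹ * R) := by
          noncomm_ring
      _ = D := by rw [mul_nonsing_inv _ hRu, nonsing_inv_mul _ hRu, one_mul, mul_one]
  have hBRR : B = R * (1 + M) * R := by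
    have : R * (1 + M) * R = R * R + R * M * R := by noncomm_ring
    rw [this, hRR, hRMR, hDdef, add_sub_cancel]
  -- M is PSD
  have hRinvH : (R⁻¹)ᴴ = R⁻¹ := by rw [conjTranspose_nonsing_inv, hRh.eq]
  have hMpsd : M.PosSemidef := by
    have := hDpsd.conjTranspose_mul_mul_same (R⁻¹)
    rwa [hRinvH] at this
  -- strict positivity witness for M
  set z := R.mulVec y with hzdef
  have hzM : z ⬝ᵥ M.mulVec z = y ⬝ᵥ D.mulVec y := by
    rw [hzdef, mulVec_mulVec, ← vecMul_transpose, hRt, dotProduct_mulVec,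
      vecMul_vecMul, ← mul_assoc, hRMR, ← dotProduct_mulVec]
  have hzMpos : 0 < z ⬝ᵥ M.mulVec z := by rw [hzM]; exact hyD
  -- eigenvalues of M
  have hMh : M.IsHermitian := hMpsd.1
  set μ := hMh.eigenvalues with hμdef
  have hμnn : ∀ i, 0 ≤ μ i := hMpsd.eigenvalues_nonneg
  set U : Matrix (Fin k) (Fin k) ℝ := (hMh.eigenvectorUnitary : Matrix (Fin k) (Fin k) ℝ)
    with hUdef
  have hUU : U * star U = 1 := (Matrix.mem_unitaryGroup_iff).mp hMh.eigenvectorUnitary.2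
  have hspec : M = U * Matrix.diagonal (RCLike.ofReal ∘ μ) * star U := hMh.spectral_theorem
  have hμex : ∃ i, 0 < μ i := by
    by_contra h
    push_neg at h
    have hμ0 : ∀ i, μ i = 0 := fun i => le_antisymm (h i) (hμnn i)
    have hM0 : M = 0 := by
      have h0 : (RCLike.ofReal ∘ μ : Fin k → ℝ) = fun _ => 0 := by
        funext i; simp [hμ0 i]
      rw [hspec, h0, diagonal_zero, mul_zero, zero_mul]
    rw [hM0] at hzMpos
    simp at hzMpos
  -- det (1 + M) > 1
  have h1M : (1 : Matrix (Fin k) (Fin k) ℝ) + M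
      = U * (Matrix.diagonal (fun i => 1 + μ i)) * star U := by
    have h1 : (1 : Matrix (Fin k) (Fin k) ℝ) = U * 1 * star U := by
      rw [mul_one, hUU]
    calc (1 : Matrix (Fin k) (Fin k) ℝ) + M
        = U * 1 * star U + U * Matrix.diagonal (RCLike.ofReal ∘ μ) * star U := by
          rw [← h1, ← hspec]
      _ = U * (1 + Matrix.diagonal (RCLike.ofReal ∘ μ)) * star U := by noncomm_ring
      _ = U * (Matrix.diagonal (fun i => 1 + μ i)) * star U := by
          congr 1
          congr 1
          rw [← diagonal_one, diagonal_add]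
          congr 1
  have hdet1M : (1 + M).det = ∏ i, (1 + μ i) := by
    rw [h1M, det_mul_right_comm, hUU, one_mul, det_diagonal]
  have hprod : 1 < ∏ i, (1 + μ i) := by
    obtain ⟨i0, hi0⟩ := hμex
    have := Finset.prod_lt_prod (s := Finset.univ) (f := fun _ : Fin k => (1:ℝ))
      (g := fun i => 1 + μ i) (fun i _ => one_pos)
      (fun i _ => by beta_reduce; linarith [hμnn i])
      ⟨i0, Finset.mem_univ _, by beta_reduce; linarith⟩
    simpa using this
  -- conclude
  have : B.det = A.det * (1 + M).det := by
    rw [hBRR, det_mul, det_mul, ← hdetA]; ring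
  rw [this]
  nlinarith [hA.det_pos, hdet1M, hprod]

/-- Determinant comparison for a convex combination of two symmetric positive
definite matrices dominating a third. -/
theorem stmt9 {k : ℕ} (F₁ F₂ G : Matrix (Fin k) (Fin k) ℝ)
    (hF₁sym : F₁.IsSymm) (hF₂sym : F₂.IsSymm) (hGsym : G.IsSymm)
    (hF₁pd : F₁.PosDef) (hF₂pd : F₂.PosDef) (hGpd : G.PosDef)
    (γ₁ γ₂ : ℝ) (hγ₁ : 0 < γ₁) (hγ₂ : 0 < γ₂) (hsum : γ₁ + γ₂ = 1)
    (hle1 : ∀ y : Fin k → ℝ, y ⬝ᵥ G.mulVec y ≤ y ⬝ᵥ F₁.mulVec y)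
    (hle2 : ∀ y : Fin k → ℝ, y ⬝ᵥ G.mulVec y ≤ y ⬝ᵥ F₂.mulVec y)
    (hstrict : ∃ y : Fin k → ℝ,
      y ⬝ᵥ G.mulVec y < y ⬝ᵥ F₁.mulVec y ∨ y ⬝ᵥ G.mulVec y < y ⬝ᵥ F₂.mulVec y) :
    G.det < (γ₁ • F₁ + γ₂ • F₂).det := by
  set H := γ₁ • F₁ + γ₂ • F₂ with hHdef
  have hHsym : H.IsSymm := by
    rw [hHdef, Matrix.IsSymm, transpose_add, transpose_smul, transpose_smul,
      hF₁sym.eq, hF₂sym.eq]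
  have hHh : H.IsHermitian := by
    rw [Matrix.IsHermitian, conjTranspose_eq_transpose_of_trivial]
    exact hHsym
  have hquad : ∀ y : Fin k → ℝ,
      y ⬝ᵥ H.mulVec y = (γ₁ * (y ⬝ᵥ F₁.mulVec y)) + (γ₂ * (y ⬝ᵥ F₂.mulVec y)) := by
    intro y
    simp [hHdef, add_mulVec, smul_mulVec, dotProduct_add, dotProduct_smul,
      smul_eq_mul]
  have hle : ∀ y : Fin k → ℝ, y ⬝ᵥ G.mulVec y ≤ y ⬝ᵥ H.mulVec y := by
    intro y
    rw [hquad y]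
    have h1 : γ₁ * (y ⬝ᵥ G.mulVec y) + γ₂ * (y ⬝ᵥ G.mulVec y) = y ⬝ᵥ G.mulVec y := by
      rw [← add_mul, hsum, one_mul]
    linarith [mul_le_mul_of_nonneg_left (hle1 y) hγ₁.le,
      mul_le_mul_of_nonneg_left (hle2 y) hγ₂.le]
  have hs : ∃ y : Fin k → ℝ, y ⬝ᵥ G.mulVec y < y ⬝ᵥ H.mulVec y := by
    obtain ⟨y, hy | hy⟩ := hstrict
    · exact ⟨y, by
        rw [hquad y]
        have h1 : γ₁ * (y ⬝ᵥ G.mulVec y) + γ₂ * (y ⬝ᵥ G.mulVec y) = y ⬝ᵥ G.mulVec y := by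
          rw [← add_mul, hsum, one_mul]
        linarith [mul_lt_mul_of_pos_left hy hγ₁,
          mul_le_mul_of_nonneg_left (hle2 y) hγ₂.le]⟩
    · exact ⟨y, by
        rw [hquad y]
        have h1 : γ₁ * (y ⬝ᵥ G.mulVec y) + γ₂ * (y ⬝ᵥ G.mulVec y) = y ⬝ᵥ G.mulVec y := by
          rw [← add_mul, hsum, one_mul]
        linarith [mul_lt_mul_of_pos_left hy hγ₂,
          mul_le_mul_of_nonneg_left (hle1 y) hγ₁.le]⟩
  exact det_lt_det_aux hGpd hHh hle hs
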